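/- Let p > 1 be a real number and z a complex number with Re(z) > 0. Then the sum over pairs of integers (a, b) with b ≥ 0 and a ≥ −⌊2b/3⌋ of p^{−(a+b)z} converges absolutely and equals (1 − p^{−z})^{−1} · (1 + 3p^{−z}(1 − p^{−z})^{−1}). -/

import Mathlib

open Complex

lemma sigFinExt {f : ℕ → ℕ} {m n : ℕ} {j : Fin (f m)} {b : Fin (f n)}
    (h : m = n) (h2 : (j : ℕ) = (b : ℕ)) : (⟨m, j⟩ : Σ k, Fin (f k)) = ⟨n, b⟩ := by
  subst h
  simp [Fin.ext_iff, h2]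

def localEquiv : (Σ n : ℕ, Fin (3 * n + 1)) ≃ {q : ℤ × ℤ // 0 ≤ q.2 ∧ -(2 * q.2 / 3) ≤ q.1} where
  toFun := fun s => ⟨((s.1 : ℤ) - (s.2.1 : ℤ), (s.2.1 : ℤ)), by
    obtain ⟨n, b⟩ := s
    have hb : (b : ℕ) < 3 * n + 1 := b.2
    constructor <;> simp <;> omega⟩
  invFun := fun q => ⟨(q.1.1 + q.1.2).toNat, ⟨q.1.2.toNat, by
    obtain ⟨⟨a, b⟩, h1, h2⟩ := q
    simp at *
    omega⟩⟩
  left_inv := fun s => by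
    obtain ⟨n, b⟩ := s
    have hb : (b : ℕ) < 3 * n + 1 := b.2
    beta_reduce
    apply sigFinExt (f := fun k => 3 * k + 1) <;> simp <;> omega
  right_inv := fun q => by
    obtain ⟨⟨a, b⟩, h1, h2⟩ := q
    ext <;> simp <;> omega

open Complex in
theorem local_factor_sum (p : ℝ) (hp : 1 < p) (z : ℂ) (hz : 0 < z.re) :
    Summable (fun q : {q : ℤ × ℤ // 0 ≤ q.2 ∧ -(2 * q.2 / 3) ≤ q.1} =>
      ‖(p : ℂ) ^ (-(((q.1.1 + q.1.2 : ℤ) : ℂ)) * z)‖) ∧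
    HasSum (fun q : {q : ℤ × ℤ // 0 ≤ q.2 ∧ -(2 * q.2 / 3) ≤ q.1} =>
      (p : ℂ) ^ (-(((q.1.1 + q.1.2 : ℤ) : ℂ)) * z))
      ((1 - (p : ℂ) ^ (-z))⁻¹ * (1 + 3 * (p : ℂ) ^ (-z) * (1 - (p : ℂ) ^ (-z))⁻¹)) := by
  set x : ℂ := (p : ℂ) ^ (-z) with hxdef
  have hp0 : (0 : ℝ) < p := lt_trans one_pos hp
  have hxn : ‖x‖ = p ^ (-z.re) := by
    rw [hxdef, Complex.norm_cpow_eq_rpow_re_of_pos hp0, Complex.neg_re]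
  have hx1 : ‖x‖ < 1 := by
    rw [hxn]; exact Real.rpow_lt_one_of_one_lt_of_neg hp (by linarith)
  have hterm0 : ∀ m : ℤ, (p : ℂ) ^ (-((m : ℂ)) * z) = x ^ m := by
    intro m
    rw [show -((m : ℂ)) * z = (m : ℂ) * (-z) by ring, Complex.cpow_int_mul]
  have hkey : ∀ s : Σ n : ℕ, Fin (3 * n + 1),
      ((localEquiv s).1.1 + (localEquiv s).1.2 : ℤ) = (s.1 : ℤ) := by
    rintro ⟨n, b⟩
    simp [localEquiv]
  have hterm : ∀ s : Σ n : ℕ, Fin (3 * n + 1),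
      (p : ℂ) ^ (-((((localEquiv s).1.1 + (localEquiv s).1.2 : ℤ) : ℂ)) * z)
        = x ^ s.1 := by
    intro s
    rw [hterm0, hkey s, zpow_natCast]
  have hxne : (1 - x) ≠ 0 := by
    intro h
    have hx : x = 1 := by linear_combination -h
    rw [hx] at hx1; simp at hx1
  have hsum_norm : Summable (fun s : Σ n : ℕ, Fin (3 * n + 1) => ‖x‖ ^ s.1) := by
    rw [summable_sigma_of_nonneg (fun s => pow_nonneg (norm_nonneg x) _)]
    refine ⟨fun n => summable_of_finite_support (Set.toFinite _), ?_⟩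
    have hr : ‖(‖x‖ : ℝ)‖ < 1 := by
      rwa [Real.norm_eq_abs, _root_.abs_of_nonneg (norm_nonneg x)]
    have h1 := (hasSum_coe_mul_geometric_of_norm_lt_one (r := ‖x‖) hr).mul_left 3
    have h2 := hasSum_geometric_of_norm_lt_one (ξ := ‖x‖) hr
    refine ((h1.add h2).summable).congr fun n => ?_
    rw [tsum_fintype]
    simp [Finset.sum_const]
    push_cast
    ring
  have hsum_sigma : Summable (fun s : Σ n : ℕ, Fin (3 * n + 1) => x ^ s.1) :=
    Summable.of_norm (by simpa [norm_pow] using hsum_norm)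
  have hfiber : ∀ n : ℕ, HasSum (fun _ : Fin (3 * n + 1) => x ^ n)
      ((3 * (n : ℂ) + 1) * x ^ n) := by
    intro n
    have h := hasSum_fintype (fun _ : Fin (3 * n + 1) => x ^ n)
    simp only [Finset.sum_const, Finset.card_univ, Fintype.card_fin, nsmul_eq_mul] at h
    convert h using 2
    push_cast; ring
  have hgeom : HasSum (fun n : ℕ => (3 * (n : ℂ) + 1) * x ^ n)
      (3 * (x / (1 - x) ^ 2) + (1 - x)⁻¹) := by
    have h1 := (hasSum_coe_mul_geometric_of_norm_lt_one (r := x) hx1).mul_left 3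
    have h2 := hasSum_geometric_of_norm_lt_one (ξ := x) hx1
    have heq : (fun n : ℕ => (3 * (n : ℂ) + 1) * x ^ n)
        = fun n : ℕ => 3 * ((n : ℂ) * x ^ n) + x ^ n := by funext n; ring
    rw [heq]; exact h1.add h2
  have hval : 3 * (x / (1 - x) ^ 2) + (1 - x)⁻¹
      = (1 - x)⁻¹ * (1 + 3 * x * (1 - x)⁻¹) := by
    field_simp
    ring
  have hsigma : HasSum (fun s : Σ n : ℕ, Fin (3 * n + 1) => x ^ s.1)
      ((1 - x)⁻¹ * (1 + 3 * x * (1 - x)⁻¹)) := by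
    rw [← hval]
    exact hgeom.sigma_of_hasSum hfiber hsum_sigma
  constructor
  · rw [← localEquiv.summable_iff]
    refine hsum_norm.congr fun s => ?_
    simp only [Function.comp_apply]
    rw [hterm s, norm_pow]
  · rw [← localEquiv.hasSum_iff]
    have heq : ((fun q : {q : ℤ × ℤ // 0 ≤ q.2 ∧ -(2 * q.2 / 3) ≤ q.1} =>
        (p : ℂ) ^ (-(((q.1.1 + q.1.2 : ℤ) : ℂ)) * z)) ∘ localEquiv)
        = fun s : Σ n : ℕ, Fin (3 * n + 1) => x ^ s.1 := funext fun s => hterm s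
    rw [heq]
    exact hsigma
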